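/- (Lemma estimating p^+) Let B be a Boolean algebra, L a sublattice of B, a_i < b_i in L, ê_I ∈ L^n as usual, and f: {ê_I : I ⊆ [n]} → L monotone and satisfying (★). Define c_I^+ = f(ê_I) ∨ ⋁_{i∈I} b_i' (complement in B) and p^+(x) = ⋁_{I ⊆ [n]} (c_I^+ ∧ ⋀_{i∈I} x_i). Then p^+(ê_J) ≤ f(ê_J) for all J ⊆ [n]. -/

import Mathlib

/-- The generalized characteristic vector `ê_I`. -/
def eVec {n : ℕ} {B : Type*} (a b : Fin n → B) (I : Finset (Fin n)) : Fin n → B :=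
  fun i => if i ∈ I then b i else a i

/-- estimating `p⁺`: with `c_I⁺ = f(ê_I) ∨ ⋁_{i∈I} bᵢ'` and
`p⁺(x) = ⋁_I (c_I⁺ ∧ ⋀_{i∈I} x_i)`, if `f` is monotone and satisfies (★) then
`p⁺(ê_J) ≤ f(ê_J)` for all `J`. -/
theorem stmt_9 {n : ℕ} {B : Type*} [BooleanAlgebra B] (L : Sublattice B)
    (a b : Fin n → B) (haL : ∀ i, a i ∈ L) (hbL : ∀ i, b i ∈ L)
    (hab : ∀ i, a i < b i)
    (f : (Fin n → B) → B) (hfL : ∀ I : Finset (Fin n), f (eVec a b I) ∈ L)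
    (hmono : ∀ I J : Finset (Fin n), I ⊆ J → f (eVec a b I) ≤ f (eVec a b J))
    (hstar : ∀ (I : Finset (Fin n)) (k : Fin n),
      f (eVec a b (insert k I)) ⊓ a k ≤ f (eVec a b I) ∧
        f (eVec a b I) ≤ f (eVec a b (I.erase k)) ⊔ b k)
    (J : Finset (Fin n)) :
    (Finset.univ.powerset).sup
        (fun I : Finset (Fin n) =>
          (f (eVec a b I) ⊔ I.sup (fun i => (b i)ᶜ)) ⊓ I.inf (eVec a b J))
      ≤ f (eVec a b J) := by
  -- basic fact: f(ê_I) ⊓ a k ≤ f(ê_{I.erase k})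
  have key : ∀ (I : Finset (Fin n)) (k : Fin n),
      f (eVec a b I) ⊓ a k ≤ f (eVec a b (I.erase k)) := by
    intro I k
    calc f (eVec a b I) ⊓ a k
        ≤ f (eVec a b (insert k (I.erase k))) ⊓ a k := by
          gcongr
          exact hmono _ _ (fun x hx => by
            by_cases hxk : x = k
            · simp [hxk]
            · exact Finset.mem_insert_of_mem (Finset.mem_erase.2 ⟨hxk, hx⟩))
      _ ≤ f (eVec a b (I.erase k)) := (hstar (I.erase k) k).1
  -- iterated: f(ê_I) ⊓ ⋀_{i∈S} a i ≤ f(ê_{I \ S})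
  have iter : ∀ (S I : Finset (Fin n)),
      f (eVec a b I) ⊓ S.inf a ≤ f (eVec a b (I \ S)) := by
    intro S
    induction S using Finset.induction with
    | empty => intro I; simp
    | insert _ _ hk ih =>
      rename_i k S'
      intro I
      have h1 : f (eVec a b I) ⊓ (insert k S').inf a
          ≤ (f (eVec a b I) ⊓ a k) ⊓ S'.inf a := by
        rw [Finset.inf_insert]
        rw [inf_assoc]
      refine h1.trans ?_
      have h2 : (f (eVec a b I) ⊓ a k) ⊓ S'.inf a
          ≤ f (eVec a b (I.erase k)) ⊓ S'.inf a := by gcongr; exact key I k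
      refine h2.trans ?_
      have h3 := ih (I.erase k)
      have heq : I.erase k \ S' = I \ insert k S' := by
        ext x; simp [Finset.mem_erase, Finset.mem_sdiff, Finset.mem_insert]
        tauto
      rw [heq] at h3
      exact h3
  apply Finset.sup_le
  intro I _
  rw [inf_sup_right]
  apply sup_le
  · -- f(ê_I) ⊓ ⋀_{i∈I} ê_J i ≤ f(ê_J)
    have h1 : I.inf (eVec a b J) ≤ (I \ J).inf a := by
      refine le_trans (Finset.inf_mono (Finset.sdiff_subset (s := I) (t := J))) ?_
      apply Finset.le_inf
      intro i hi
      refine le_trans (Finset.inf_le hi) ?_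
      have : i ∉ J := (Finset.mem_sdiff.1 hi).2
      simp [eVec, this]
    calc f (eVec a b I) ⊓ I.inf (eVec a b J)
        ≤ f (eVec a b I) ⊓ (I \ J).inf a := by gcongr
      _ ≤ f (eVec a b (I \ (I \ J))) := iter _ _
      _ ≤ f (eVec a b J) := hmono _ _ (by
          intro x hx
          have := Finset.mem_sdiff.1 hx
          have hx2 := this.2
          simp [Finset.mem_sdiff, this.1] at hx2
          exact hx2)
  · -- (⋁ bᶜ) ⊓ inf = ⊥
    rw [Finset.sup_inf_distrib_right]
    apply Finset.sup_le
    intro i hi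
    have h : I.inf (eVec a b J) ≤ b i := by
      refine le_trans (Finset.inf_le hi) ?_
      by_cases hij : i ∈ J
      · simp [eVec, hij]
      · simp only [eVec, if_neg hij]
        exact (hab i).le
    calc (b i)ᶜ ⊓ I.inf (eVec a b J) ≤ (b i)ᶜ ⊓ b i := by gcongr
      _ = ⊥ := by simp
      _ ≤ _ := bot_le
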